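/- Let f(z) = z(1−z)(3−2z)/(4z²−6z+3) and let τ be the supremum of f over the interval [1/2, 1]. There exists n₀ such that the following holds for every real n ≥ n₀: if G is a finite bipartite graph with parts A and B and Val : A ∪ B → ℝ is a weight function satisfying (i) n/2 ≤ Val(v) ≤ n for every v ∈ A and 0 ≤ Val(v) < n/2 for every v ∈ B, (ii) Val(v) + Val(v') ≤ n for every edge vv' of G, (iii) deg(v) ≥ Val(v)·(Val(v)−3)/6 for every v ∈ A, and (iv) deg(v') ≤ (n − Val(v) − 1)(n − Val(v) − 2)/2 for every edge vv' of G with v ∈ A and v' ∈ B, then Σ_{v ∈ A ∪ B} Val(v) ≤ τ·n·(|A| + |B|). -/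

import Mathlib

open Finset

set_option maxHeartbeats 1000000

/-- The rational function `z ↦ z(1-z)(3-2z)/(4z² - 6z + 3)`. -/
noncomputable def fratio (z : ℝ) : ℝ :=
  z * (1 - z) * (3 - 2 * z) / (4 * z ^ 2 - 6 * z + 3)

lemma denom_pos (z : ℝ) : 0 < 4 * z ^ 2 - 6 * z + 3 := by nlinarith [sq_nonneg (2 * z - 3 / 2)]

lemma fratio_bdd : BddAbove (fratio '' Set.Icc (1 / 2 : ℝ) 1) := by
  refine ⟨4 / 3, ?_⟩
  rintro _ ⟨z, ⟨hz1, hz2⟩, rfl⟩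
  rw [fratio, div_le_iff₀ (denom_pos z)]
  nlinarith [sq_nonneg (2 * z - 3 / 2)]

lemma tau_ge {z : ℝ} (hz1 : 1 / 2 ≤ z) (hz2 : z ≤ 1) :
    fratio z ≤ sSup (fratio '' Set.Icc (1 / 2 : ℝ) 1) :=
  le_csSup fratio_bdd ⟨z, ⟨hz1, hz2⟩, rfl⟩

lemma tau_half : (1 / 2 : ℝ) ≤ sSup (fratio '' Set.Icc (1 / 2 : ℝ) 1) := by
  have := tau_ge (z := 1 / 2) le_rfl (by norm_num)
  rw [fratio] at this
  norm_num at this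
  linarith

lemma tau_ge_tau1 : (75981 / 146600 : ℝ) ≤ sSup (fratio '' Set.Icc (1 / 2 : ℝ) 1) := by
  have := tau_ge (z := 57 / 100) (by norm_num) (by norm_num)
  rw [fratio] at this
  norm_num at this
  linarith

lemma lemmaP (z : ℝ) (h1 : 1 / 2 ≤ z) (h2 : z ≤ 1) :
    ((-9 * (z - 75981 / 146600) * (1 - z) + 3 * z * (z + 75981 / 146600 - 1)) + 1 / 40) *
        (4 * z ^ 2 - 6 * z + 3) +
      9 * (z * (1 - z) * (3 - 2 * z) - 75981 / 146600 * (4 * z ^ 2 - 6 * z + 3)) ≤ 0 := by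
  nlinarith [sq_nonneg (z - 539 / 1000), sq_nonneg (z - 1 / 2),
    mul_nonneg (sub_nonneg.2 h1) (sub_nonneg.2 h2), sq_nonneg z,
    mul_nonneg (mul_nonneg (sub_nonneg.2 h1) (sub_nonneg.2 h2)) (sub_nonneg.2 h2),
    mul_nonneg (mul_nonneg (sub_nonneg.2 h1) (sub_nonneg.2 h1)) (sub_nonneg.2 h2)]

/-- The key per-vertex inequality. -/
lemma key_ineq (n x : ℝ) (hn : 240 ≤ n) (hx1 : n / 2 ≤ x) (hx2 : x ≤ n) :
    3 * (x - sSup (fratio '' Set.Icc (1 / 2 : ℝ) 1) * n) * ((n - x - 1) * (n - x - 2)) ≤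
      x * (x - 3) * (x + sSup (fratio '' Set.Icc (1 / 2 : ℝ) 1) * n - n) := by
  set τ := sSup (fratio '' Set.Icc (1 / 2 : ℝ) 1) with hτdef
  have hτ1 : (75981 / 146600 : ℝ) ≤ τ := tau_ge_tau1
  have hτh : (1 / 2 : ℝ) ≤ τ := tau_half
  have hn0 : (0 : ℝ) < n := by linarith
  set z := x / n with hzdef
  have hx : x = z * n := by rw [hzdef, div_mul_cancel₀ x hn0.ne']
  have hz1 : 1 / 2 ≤ z := by rw [hzdef, le_div_iff₀ hn0]; linarith
  have hz2 : z ≤ 1 := by rw [hzdef, div_le_one hn0]; exact hx2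
  have hD : (0 : ℝ) < 4 * z ^ 2 - 6 * z + 3 := denom_pos z
  have hN : z * (1 - z) * (3 - 2 * z) ≤ τ * (4 * z ^ 2 - 6 * z + 3) := by
    have h := tau_ge hz1 hz2
    rw [fratio, div_le_iff₀ hD] at h
    linarith
  have hQ := lemmaP z hz1 hz2
  have hD34 : (3 / 4 : ℝ) ≤ 4 * z ^ 2 - 6 * z + 3 := by nlinarith [sq_nonneg (2 * z - 3 / 2)]
  -- term bounds
  have hT1 : (z * (1 - z) * (3 - 2 * z) - τ * (4 * z ^ 2 - 6 * z + 3)) *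
      (n ^ 2 * (n * (4 * z ^ 2 - 6 * z + 3) - 9)) ≤ 0 := by
    apply mul_nonpos_of_nonpos_of_nonneg
    · linarith
    · have : (9 : ℝ) ≤ n * (4 * z ^ 2 - 6 * z + 3) := by nlinarith
      nlinarith [sq_nonneg n]
  have hT2 : n ^ 2 * (((-9 * (z - 75981 / 146600) * (1 - z) + 3 * z * (z + 75981 / 146600 - 1)) + 1 / 40) *
        (4 * z ^ 2 - 6 * z + 3) +
      9 * (z * (1 - z) * (3 - 2 * z) - 75981 / 146600 * (4 * z ^ 2 - 6 * z + 3))) ≤ 0 :=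
    mul_nonpos_of_nonneg_of_nonpos (sq_nonneg n) hQ
  have hT3 : n * (4 * z ^ 2 - 6 * z + 3) * (-(1 / 40) * n + 6 * (z - τ)) ≤ 0 := by
    apply mul_nonpos_of_nonneg_of_nonpos
    · positivity
    · linarith
  have hT4 : -6 * (z * n ^ 2) * ((τ - 75981 / 146600) * (4 * z ^ 2 - 6 * z + 3)) ≤ 0 := by
    have hz0 : (0 : ℝ) ≤ z := by linarith
    have h1 : (0 : ℝ) ≤ (τ - 75981 / 146600) * (4 * z ^ 2 - 6 * z + 3) := by
      apply mul_nonneg <;> linarith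
    have h2 : (0 : ℝ) ≤ 6 * (z * n ^ 2) * ((τ - 75981 / 146600) * (4 * z ^ 2 - 6 * z + 3)) := by
      apply mul_nonneg _ h1
      positivity
    linarith
  have hED : (3 * (z * n - τ * n) * ((n - z * n - 1) * (n - z * n - 2)) -
      z * n * (z * n - 3) * (z * n + τ * n - n)) * (4 * z ^ 2 - 6 * z + 3) ≤ 0 := by
    linarith [hT1, hT2, hT3, hT4]
  have hE : 3 * (z * n - τ * n) * ((n - z * n - 1) * (n - z * n - 2)) -
      z * n * (z * n - 3) * (z * n + τ * n - n) ≤ 0 := by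
    by_contra h
    push_neg at h
    nlinarith [mul_pos h hD]
  rw [hx]
  linarith [hE]

/-- the weighted bipartite graph lemma. Here a bipartite graph with parts
`A` and `B` is given by its edge set `E ⊆ A × B`, and `τ` is the supremum of `fratio`
over `[1/2, 1]`. -/
theorem statement_13 :
    ∃ n₀ : ℝ, ∀ n : ℝ, n₀ ≤ n →
      ∀ (β : Type) (_ : DecidableEq β) (A B : Finset β) (E : Finset (β × β)) (Val : β → ℝ),
        Disjoint A B →
        (∀ e ∈ E, e.1 ∈ A ∧ e.2 ∈ B) →
        (∀ v ∈ A, n / 2 ≤ Val v ∧ Val v ≤ n) →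
        (∀ v ∈ B, 0 ≤ Val v ∧ Val v < n / 2) →
        (∀ e ∈ E, Val e.1 + Val e.2 ≤ n) →
        (∀ v ∈ A, Val v * (Val v - 3) / 6 ≤ ((E.filter fun e => e.1 = v).card : ℝ)) →
        (∀ e ∈ E, ((E.filter fun e' => e'.2 = e.2).card : ℝ)
            ≤ (n - Val e.1 - 1) * (n - Val e.1 - 2) / 2) →
        ∑ v ∈ A ∪ B, Val v ≤
          (sSup (fratio '' Set.Icc (1 / 2 : ℝ) 1)) * n * ((A.card : ℝ) + (B.card : ℝ)) := by
  refine ⟨240, fun n hn β _inst A B E Val hAB hE hA hB hEdge hdegA hdegB => ?_⟩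
  have hτh : (1 / 2 : ℝ) ≤ sSup (fratio '' Set.Icc (1 / 2 : ℝ) 1) := tau_half
  set τ := sSup (fratio '' Set.Icc (1 / 2 : ℝ) 1) with hτdef
  have hn0 : (0 : ℝ) < n := by linarith
  have hτn : n / 2 ≤ τ * n := by nlinarith
  -- the per-edge weight
  set g : β × β → ℝ := fun e => (τ * n - Val e.2) / ((E.filter fun e' => e'.2 = e.2).card : ℝ)
    with hgdef
  -- Step 1 : per-vertex bound on the A side
  have step1 : ∀ v ∈ A, Val v - τ * n ≤ ∑ e ∈ E.filter (fun e => e.1 = v), g e := by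
    intro v hv
    obtain ⟨hx1, hx2⟩ := hA v hv
    have hdeg := hdegA v hv
    have hx3 : (0 : ℝ) < Val v * (Val v - 3) / 6 := by nlinarith
    have hdegpos : 0 < (E.filter (fun e => e.1 = v)).card := by
      rcases Nat.eq_zero_or_pos (E.filter (fun e => e.1 = v)).card with h0 | h
      · rw [h0] at hdeg; norm_num at hdeg; linarith
      · exact h
    obtain ⟨e₀, he₀⟩ := Finset.card_pos.1 hdegpos
    obtain ⟨he₀E, he₀1⟩ := Finset.mem_filter.1 he₀
    -- the quantity (n - Val v - 1)(n - Val v - 2) is at least 2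
    have hd₀1 : (1 : ℝ) ≤ ((E.filter fun e' => e'.2 = e₀.2).card : ℝ) := by
      have h : e₀ ∈ E.filter fun e' => e'.2 = e₀.2 := Finset.mem_filter.2 ⟨he₀E, rfl⟩
      exact_mod_cast Finset.card_pos.2 ⟨e₀, h⟩
    have hP2 : (2 : ℝ) ≤ (n - Val v - 1) * (n - Val v - 2) := by
      have h := hdegB e₀ he₀E
      rw [he₀1] at h
      linarith
    have hP0 : (0 : ℝ) < (n - Val v - 1) * (n - Val v - 2) := by linarith
    have hnum0 : (0 : ℝ) ≤ τ * n - n + Val v := by linarith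
    -- per-edge lower bound
    have hedge : ∀ e ∈ E.filter (fun e => e.1 = v),
        2 * (τ * n - n + Val v) / ((n - Val v - 1) * (n - Val v - 2)) ≤ g e := by
      intro e he
      obtain ⟨heE, he1⟩ := Finset.mem_filter.1 he
      have hval2 : Val e.2 ≤ n - Val v := by
        have h := hEdge e heE; rw [he1] at h; linarith
      have hd1 : (1 : ℝ) ≤ ((E.filter fun e' => e'.2 = e.2).card : ℝ) := by
        have h : e ∈ E.filter fun e' => e'.2 = e.2 := Finset.mem_filter.2 ⟨heE, rfl⟩
        exact_mod_cast Finset.card_pos.2 ⟨e, h⟩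
      have hdP : ((E.filter fun e' => e'.2 = e.2).card : ℝ)
          ≤ (n - Val v - 1) * (n - Val v - 2) / 2 := by
        have h := hdegB e heE; rw [he1] at h; linarith
      rw [hgdef]
      rw [div_le_div_iff₀ hP0 (by linarith)]
      have h1 : τ * n - n + Val v ≤ τ * n - Val e.2 := by linarith
      nlinarith [mul_le_mul_of_nonneg_left hdP hnum0]
    -- sum the per-edge bounds
    have hsum : ((E.filter (fun e => e.1 = v)).card : ℝ) *
        (2 * (τ * n - n + Val v) / ((n - Val v - 1) * (n - Val v - 2)))
          ≤ ∑ e ∈ E.filter (fun e => e.1 = v), g e := by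
      have h := Finset.card_nsmul_le_sum (E.filter (fun e => e.1 = v)) g
        (2 * (τ * n - n + Val v) / ((n - Val v - 1) * (n - Val v - 2))) hedge
      rwa [nsmul_eq_mul] at h
    have hb0 : (0 : ℝ) ≤ 2 * (τ * n - n + Val v) / ((n - Val v - 1) * (n - Val v - 2)) := by
      positivity
    have hc2 : Val v * (Val v - 3) / 6 *
        (2 * (τ * n - n + Val v) / ((n - Val v - 1) * (n - Val v - 2)))
          ≤ ((E.filter (fun e => e.1 = v)).card : ℝ) *
            (2 * (τ * n - n + Val v) / ((n - Val v - 1) * (n - Val v - 2))) :=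
      mul_le_mul_of_nonneg_right hdeg hb0
    have hkey := key_ineq n (Val v) hn hx1 hx2
    rw [← hτdef] at hkey
    have hstep : Val v - τ * n ≤ Val v * (Val v - 3) / 6 *
        (2 * (τ * n - n + Val v) / ((n - Val v - 1) * (n - Val v - 2))) := by
      rw [show Val v * (Val v - 3) / 6 *
          (2 * (τ * n - n + Val v) / ((n - Val v - 1) * (n - Val v - 2)))
          = Val v * (Val v - 3) * (Val v + τ * n - n) /
            (3 * ((n - Val v - 1) * (n - Val v - 2))) by field_simp; ring]
      rw [le_div_iff₀ (by positivity)]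
      nlinarith [hkey]
    linarith
  -- Step 2 : fiberwise resummation
  have h1 : ∑ v ∈ A, (Val v - τ * n) ≤ ∑ v ∈ A, ∑ e ∈ E.filter (fun e => e.1 = v), g e :=
    Finset.sum_le_sum step1
  have h2 : ∑ v ∈ A, ∑ e ∈ E.filter (fun e => e.1 = v), g e = ∑ e ∈ E, g e :=
    Finset.sum_fiberwise_of_maps_to (fun e he => (hE e he).1) g
  have h3 : ∑ e ∈ E, g e = ∑ w ∈ B, ∑ e ∈ E.filter (fun e => e.2 = w), g e :=
    (Finset.sum_fiberwise_of_maps_to (fun e he => (hE e he).2) g).symm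
  -- Step 3 : per-vertex bound on the B side
  have h4 : ∀ w ∈ B, ∑ e ∈ E.filter (fun e => e.2 = w), g e ≤ τ * n - Val w := by
    intro w hw
    obtain ⟨hw0, hw1⟩ := hB w hw
    have hwτ : (0 : ℝ) ≤ τ * n - Val w := by linarith
    have hcongr : ∀ e ∈ E.filter (fun e => e.2 = w),
        g e = (τ * n - Val w) / ((E.filter fun e' => e'.2 = w).card : ℝ) := by
      intro e he
      obtain ⟨heE, he2⟩ := Finset.mem_filter.1 he
      rw [hgdef]
      simp only [he2]
    rw [Finset.sum_congr rfl hcongr, Finset.sum_const, nsmul_eq_mul]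
    rcases Nat.eq_zero_or_pos (E.filter (fun e => e.2 = w)).card with h0 | hpos
    · rw [h0]
      push_cast
      simpa using hwτ
    · have hc : ((E.filter (fun e => e.2 = w)).card : ℝ) ≠ 0 := by
        exact_mod_cast Nat.pos_iff_ne_zero.1 hpos
      rw [mul_comm, div_mul_cancel₀ _ hc]
  have h5 : ∑ w ∈ B, ∑ e ∈ E.filter (fun e => e.2 = w), g e ≤ ∑ w ∈ B, (τ * n - Val w) :=
    Finset.sum_le_sum h4
  have hsumA : ∑ v ∈ A, (Val v - τ * n) = (∑ v ∈ A, Val v) - (A.card : ℝ) * (τ * n) := by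
    rw [Finset.sum_sub_distrib, Finset.sum_const, nsmul_eq_mul]
  have hsumB : ∑ w ∈ B, (τ * n - Val w) = (B.card : ℝ) * (τ * n) - ∑ w ∈ B, Val w := by
    rw [Finset.sum_sub_distrib, Finset.sum_const, nsmul_eq_mul]
  have hmain : (∑ v ∈ A, Val v) - (A.card : ℝ) * (τ * n)
      ≤ (B.card : ℝ) * (τ * n) - ∑ w ∈ B, Val w := by
    rw [← hsumA, ← hsumB]
    calc ∑ v ∈ A, (Val v - τ * n) ≤ ∑ v ∈ A, ∑ e ∈ E.filter (fun e => e.1 = v), g e := h1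
      _ = ∑ e ∈ E, g e := h2
      _ = ∑ w ∈ B, ∑ e ∈ E.filter (fun e => e.2 = w), g e := h3
      _ ≤ ∑ w ∈ B, (τ * n - Val w) := h5
  rw [Finset.sum_union hAB]
  nlinarith [hmain]
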